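/- arXiv:2301.06935 — 4 statements merged into one kernel-verified Lean document; each statement's English description precedes it below -/
import Mathlib

section
/- Let α ∈ ℝ, κ ≥ 0 and let f, g solve f' = -αg, g' = -κ(1+t²)g + αf + (2t/(1+t²))g with data at time 0. Then for all 0 ≤ t ≤ κ^(-1/3), f(t)² + g(t)² ≤ (1+t²)²·(f(0)² + g(0)²). -/
theorem stmt7 (α κ : ℝ) (hκ : 0 ≤ κ)
    (f g : ℝ → ℝ) (hf : Differentiable ℝ f) (hg : Differentiable ℝ g)
    (hfeq : ∀ t, deriv f t = -α * g t)
    (hgeq : ∀ t, deriv g t = -κ * (1 + t ^ 2) * g t + α * f t + (2 * t / (1 + t ^ 2)) * g t) :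
    ∀ t : ℝ, 0 ≤ t → t ≤ κ ^ (-(1 : ℝ) / 3) →
      f t ^ 2 + g t ^ 2 ≤ (1 + t ^ 2) ^ 2 * (f 0 ^ 2 + g 0 ^ 2) := by
  have hpos : ∀ s : ℝ, (0:ℝ) < 1 + s ^ 2 := fun s => by positivity
  have hfd : ∀ s, HasDerivAt f (-α * g s) s := fun s => hfeq s ▸ (hf s).hasDerivAt
  have hgd : ∀ s, HasDerivAt g
      (-κ * (1 + s ^ 2) * g s + α * f s + (2 * s / (1 + s ^ 2)) * g s) s :=
    fun s => hgeq s ▸ (hg s).hasDerivAt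
  set h : ℝ → ℝ := fun s => (f s ^ 2 + g s ^ 2) / (1 + s ^ 2) ^ 2 with hh
  have hhd : ∀ s, HasDerivAt h
      ((-2 * κ * (1 + s ^ 2) ^ 3 * g s ^ 2 - 4 * s * (1 + s ^ 2) * f s ^ 2)
        / ((1 + s ^ 2) ^ 2) ^ 2) s := by
    intro s
    have hE : HasDerivAt (fun x => f x ^ 2 + g x ^ 2)
        (2 * f s ^ 1 * (-α * g s) +
          2 * g s ^ 1 * (-κ * (1 + s ^ 2) * g s + α * f s + (2 * s / (1 + s ^ 2)) * g s)) s :=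
      ((hfd s).pow 2).add ((hgd s).pow 2)
    have hu : HasDerivAt (fun x : ℝ => (1 + x ^ 2) ^ 2)
        (2 * (1 + s ^ 2) ^ 1 * (0 + 2 * s ^ 1 * 1)) s :=
      (((hasDerivAt_const s (1:ℝ)).add ((hasDerivAt_id s).pow 2)).pow 2)
    have := hE.div hu (by have := hpos s; positivity)
    refine HasDerivAt.congr_deriv this ?_
    have h1 : (1 + s ^ 2) ≠ 0 := ne_of_gt (hpos s)
    field_simp
    ring
  have hanti : AntitoneOn h (Set.Ici (0:ℝ)) := by
    apply antitoneOn_of_deriv_nonpos (convex_Ici 0)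
    · exact fun s _ => ((hhd s).differentiableAt).continuousAt.continuousWithinAt
    · exact fun s _ => (hhd s).differentiableAt.differentiableWithinAt
    · intro s hs
      rw [interior_Ici] at hs
      rw [(hhd s).deriv]
      apply div_nonpos_of_nonpos_of_nonneg
      · have h1 : (0:ℝ) ≤ 2 * κ * (1 + s ^ 2) ^ 3 * g s ^ 2 := by positivity
        have h2 : (0:ℝ) ≤ 4 * s * (1 + s ^ 2) * f s ^ 2 := by
          have : (0:ℝ) ≤ s := le_of_lt hs
          positivity
        nlinarith
      · positivity
  intro t ht _
  have := hanti (Set.self_mem_Ici) ht ht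
  simp only [hh] at this
  have ht2 : (0:ℝ) < (1 + t ^ 2) ^ 2 := by positivity
  rw [div_le_div_iff₀ (by positivity) (by positivity)] at this
  nlinarith [this]
end

section
/- Let K > 0 and β > 0, and let (u, j) solve u' = -j, j' = (K/β)u + (2s/(1+s²) - K(1+s²))·j. Define E(s) = u(s)² + (β/K)·j(s)². Then E'(s) = 2·(2s/(1+s²) - K(1+s²))·(β/K)·j(s)², and in particular if K ≥ 1 then E is non-increasing. -/
theorem stmt14 (K β : ℝ) (hK : 0 < K) (hβ : 0 < β)
    (u j : ℝ → ℝ) (hu : Differentiable ℝ u) (hj : Differentiable ℝ j)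
    (hueq : ∀ s, deriv u s = -j s)
    (hjeq : ∀ s, deriv j s = (K / β) * u s + (2 * s / (1 + s ^ 2) - K * (1 + s ^ 2)) * j s) :
    (∀ s, deriv (fun s => u s ^ 2 + (β / K) * j s ^ 2) s
        = 2 * (2 * s / (1 + s ^ 2) - K * (1 + s ^ 2)) * ((β / K) * j s ^ 2))
    ∧ (1 ≤ K → Antitone (fun s => u s ^ 2 + (β / K) * j s ^ 2)) := by
  have hE : ∀ s, deriv (fun s => u s ^ 2 + (β / K) * j s ^ 2) s
      = 2 * (2 * s / (1 + s ^ 2) - K * (1 + s ^ 2)) * ((β / K) * j s ^ 2) := by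
    intro s
    have h1 : HasDerivAt u (deriv u s) s := (hu s).hasDerivAt
    have h2 : HasDerivAt j (deriv j s) s := (hj s).hasDerivAt
    have h : HasDerivAt (fun s => u s ^ 2 + (β / K) * j s ^ 2)
        (2 * u s * deriv u s + (β / K) * (2 * j s * deriv j s)) s := by
      exact ((h1.pow 2).add ((h2.pow 2).const_mul (β / K))).congr_deriv (by ring)
    rw [h.deriv, hueq, hjeq]
    field_simp
    ring
  refine ⟨hE, fun hK1 => ?_⟩
  have hdiff : Differentiable ℝ (fun s => u s ^ 2 + (β / K) * j s ^ 2) :=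
    (hu.pow 2).add ((hj.pow 2).const_mul _)
  apply antitone_of_deriv_nonpos hdiff
  intro s
  rw [hE s]
  have hs : (0:ℝ) < 1 + s ^ 2 := by positivity
  have h1 : 2 * s / (1 + s ^ 2) ≤ 1 := by
    rw [div_le_one hs]; nlinarith [sq_nonneg (s - 1)]
  have h2 : (1:ℝ) ≤ K * (1 + s ^ 2) := by nlinarith [sq_nonneg s]
  have hA : 2 * s / (1 + s ^ 2) - K * (1 + s ^ 2) ≤ 0 := by linarith
  have : (0:ℝ) ≤ (β / K) * j s ^ 2 := by positivity
  nlinarith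
end

section
/- Let (wₖ)ₖ∈ℤ be a nonnegative sequence satisfying wₖ ≤ δ_{k,k₀} + c·(Wₖ₊₁ + Wₖ₋₁) for all k, where Wₖ = sup over the relevant time of wₖ, 0 < c < 1/4, and the bound closes in the sense that Wₖ ≤ δ_{k,k₀} + c(Wₖ₊₁ + Wₖ₋₁) with (Wₖ) bounded. Then Wₖ ≤ (1/(1-2c))·(2c)^{|k - k₀|} for all k ∈ ℤ. -/
theorem stmt16 (c : ℝ) (hc0 : 0 < c) (hc : c < 1 / 4) (k₀ : ℤ) (W : ℤ → ℝ)
    (hbdd : ∃ M, ∀ k, W k ≤ M) (hnonneg : ∀ k, 0 ≤ W k)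
    (hrec : ∀ k, W k ≤ (if k = k₀ then 1 else 0) + c * (W (k + 1) + W (k - 1))) :
    ∀ k, W k ≤ (1 / (1 - 2 * c)) * (2 * c) ^ (k - k₀).natAbs := by
  obtain ⟨M, hM⟩ := hbdd
  have hM0 : 0 ≤ M := le_trans (hnonneg k₀) (hM k₀)
  have h2c : (0:ℝ) < 2 * c := by linarith
  have h2c1 : 2 * c < 1 := by linarith
  have hden : (0:ℝ) < 1 - 2 * c := by linarith
  have hinv : (0:ℝ) < 1 / (1 - 2 * c) := by positivity
  have hu : (1 / (1 - 2 * c)) * (1 - 2 * c) = 1 := by field_simp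
  set T : ℤ → ℝ := fun k => (1 / (1 - 2 * c)) * (2 * c) ^ (k - k₀).natAbs with hT
  have key : ∀ n : ℕ, ∀ k, W k ≤ T k + (2 * c) ^ n * M := by
    intro n
    induction n with
    | zero =>
      intro k
      have hTk : 0 ≤ T k := by
        simp only [hT]
        positivity
      simpa using by linarith [hM k]
    | succ n ih =>
      intro k
      have h1 := ih (k + 1)
      have h2 := ih (k - 1)
      have hr := hrec k
      by_cases hk : k = k₀
      · rw [if_pos hk] at hr
        have ha : ((k + 1 : ℤ) - k₀).natAbs = 1 := by omega
        have hb : ((k - 1 : ℤ) - k₀).natAbs = 1 := by omega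
        have hd : ((k : ℤ) - k₀).natAbs = 0 := by omega
        simp only [hT] at h1 h2 ⊢
        rw [ha, pow_one] at h1
        rw [hb, pow_one] at h2
        rw [hd, pow_zero, mul_one, pow_succ]
        have hkey : 1 + c * ((1 / (1 - 2 * c)) * (2 * c) + (1 / (1 - 2 * c)) * (2 * c))
            ≤ 1 / (1 - 2 * c) := by
          nlinarith [hu, hinv, mul_pos hc0 hinv]
        nlinarith [mul_le_mul_of_nonneg_left h1 hc0.le, mul_le_mul_of_nonneg_left h2 hc0.le]
      · rw [if_neg hk, zero_add] at hr
        obtain ⟨e, he⟩ : ∃ e, ((k : ℤ) - k₀).natAbs = e + 1 :=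
          ⟨((k : ℤ) - k₀).natAbs - 1, by omega⟩
        have ha : e ≤ ((k + 1 : ℤ) - k₀).natAbs := by omega
        have hb : e ≤ ((k - 1 : ℤ) - k₀).natAbs := by omega
        have hpa : (2 * c) ^ ((k + 1 : ℤ) - k₀).natAbs ≤ (2 * c) ^ e :=
          pow_le_pow_of_le_one h2c.le h2c1.le ha
        have hpb : (2 * c) ^ ((k - 1 : ℤ) - k₀).natAbs ≤ (2 * c) ^ e :=
          pow_le_pow_of_le_one h2c.le h2c1.le hb
        have hT1 : T (k + 1) ≤ (1 / (1 - 2 * c)) * (2 * c) ^ e := by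
          simp only [hT]
          exact mul_le_mul_of_nonneg_left hpa hinv.le
        have hT2 : T (k - 1) ≤ (1 / (1 - 2 * c)) * (2 * c) ^ e := by
          simp only [hT]
          exact mul_le_mul_of_nonneg_left hpb hinv.le
        simp only [hT]
        rw [he, pow_succ, pow_succ]
        nlinarith [mul_le_mul_of_nonneg_left h1 hc0.le, mul_le_mul_of_nonneg_left h2 hc0.le,
          mul_le_mul_of_nonneg_left hT1 hc0.le, mul_le_mul_of_nonneg_left hT2 hc0.le,
          pow_pos h2c e, pow_pos h2c n]
  intro k
  have ht : Filter.Tendsto (fun n : ℕ => T k + (2 * c) ^ n * M) Filter.atTop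
      (nhds (T k + 0 * M)) :=
    Filter.Tendsto.add tendsto_const_nhds
      ((tendsto_pow_atTop_nhds_zero_of_lt_one h2c.le h2c1).mul_const M)
  rw [zero_mul, add_zero] at ht
  exact ge_of_tendsto' ht fun n => key n k
end

section
/- Let κ > 0, k a nonzero integer, and define M(k,t) = 1 if t ≤ ξ/k or κk² ≥ 1; M(k,t) = 1/(1+(ξ/k - t)²) if 0 ≤ t - ξ/k ≤ (2/(κk²))^{1/3} and κk² ≤ 1; and M(k,t) = 1/(1+(2/(κk²))^{1/3}) if t - ξ/k ≥ (2/(κk²))^{1/3} and κk² ≤ 1. Then with b(k,t) = 2(t-ξ/k)/(1+(ξ/k-t)²) - κk²(1+(ξ/k-t)²), one has b(k,t) + (∂ₜM/M)(k,t) ≤ 0 for all t where M is differentiable. -/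
theorem stmt19 (κ ξ : ℝ) (k : ℤ) (hκ : 0 < κ) (hk : k ≠ 0) :
    let M : ℝ → ℝ := fun t =>
      if t ≤ ξ / (k : ℝ) ∨ 1 ≤ κ * (k : ℝ) ^ 2 then 1
      else if t - ξ / (k : ℝ) ≤ (2 / (κ * (k : ℝ) ^ 2)) ^ ((1 : ℝ) / 3) then
        1 / (1 + (ξ / (k : ℝ) - t) ^ 2)
      else 1 / (1 + (2 / (κ * (k : ℝ) ^ 2)) ^ ((1 : ℝ) / 3))
    let b : ℝ → ℝ := fun t =>
      2 * (t - ξ / (k : ℝ)) / (1 + (ξ / (k : ℝ) - t) ^ 2)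
        - κ * (k : ℝ) ^ 2 * (1 + (ξ / (k : ℝ) - t) ^ 2)
    ∀ t, DifferentiableAt ℝ M t → b t + deriv M t / M t ≤ 0 := by
  intro M b t hdiff
  have hk0 : ((k : ℝ)) ≠ 0 := Int.cast_ne_zero.mpr hk
  have hκk : 0 < κ * (k : ℝ) ^ 2 := by positivity
  have hA0 : (0:ℝ) < (2 / (κ * (k : ℝ) ^ 2)) ^ ((1 : ℝ) / 3) :=
    Real.rpow_pos_of_pos (by positivity) _
  set c : ℝ := ξ / (k : ℝ) with hc
  set A : ℝ := (2 / (κ * (k : ℝ) ^ 2)) ^ ((1 : ℝ) / 3) with hA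
  have hMle : ∀ x, M x ≤ 1 := by
    intro x
    simp only [M]
    split_ifs with h1 h2
    · exact le_refl 1
    · rw [div_le_one (by positivity)]; nlinarith [sq_nonneg (c - x)]
    · rw [div_le_one (by positivity)]; linarith
  by_cases hcase : t ≤ c ∨ 1 ≤ κ * (k : ℝ) ^ 2
  · have hMt : M t = 1 := by simp only [M]; rw [if_pos hcase]
    have hmax : IsLocalMax M t :=
      Filter.Eventually.of_forall fun x => (hMle x).trans_eq hMt.symm
    have hd0 : deriv M t = 0 := hmax.deriv_eq_zero
    rw [hd0, hMt]
    simp only [b]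
    have hD : (0:ℝ) < 1 + (c - t) ^ 2 := by positivity
    have hb : 2 * (t - c) / (1 + (c - t) ^ 2) ≤ κ * (k : ℝ) ^ 2 * (1 + (c - t) ^ 2) := by
      rcases hcase with h | h
      · have h1 : 2 * (t - c) / (1 + (c - t) ^ 2) ≤ 0 :=
          div_nonpos_of_nonpos_of_nonneg (by linarith) hD.le
        nlinarith
      · have h1 : 2 * (t - c) / (1 + (c - t) ^ 2) ≤ 1 := by
          rw [div_le_one hD]; nlinarith [sq_nonneg (t - c - 1)]
        nlinarith
    simp only [zero_div, add_zero]
    linarith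
  · push_neg at hcase
    obtain ⟨hc1, hc2⟩ := hcase
    rcases lt_trichotomy (t - c) A with ht | ht | ht
    · -- middle region
      have hev : M =ᶠ[nhds t] fun x => 1 / (1 + (c - x) ^ 2) := by
        have h1 : ∀ᶠ x in nhds t, c < x := eventually_gt_nhds hc1
        have h2 : ∀ᶠ x in nhds t, x < c + A := eventually_lt_nhds (by linarith)
        filter_upwards [h1, h2] with x hx1 hx2
        simp only [M]
        rw [if_neg (by push_neg; exact ⟨hx1, hc2⟩), if_pos (by linarith)]
      have hD : (0:ℝ) < 1 + (c - t) ^ 2 := by positivity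
      have hderiv : deriv M t = 2 * (c - t) / (1 + (c - t) ^ 2) ^ 2 := by
        rw [hev.deriv_eq]
        have h1 : HasDerivAt (fun x : ℝ => 1 + (c - x) ^ 2) (-(2 * (c - t))) t := by
          have h := (((hasDerivAt_id t).const_sub c).pow 2).const_add 1
          refine h.congr_deriv ?_
          simp
        have h2 := h1.inv (by positivity)
        have h3 : HasDerivAt (fun x : ℝ => 1 / (1 + (c - x) ^ 2))
            (2 * (c - t) / (1 + (c - t) ^ 2) ^ 2) t := by
          simp only [one_div]
          refine h2.congr_deriv ?_
          ring
        exact h3.deriv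
      have hMt : M t = 1 / (1 + (c - t) ^ 2) := hev.self_of_nhds
      rw [hderiv, hMt]
      simp only [b]
      have key : 2 * (t - c) / (1 + (c - t) ^ 2) - κ * (k : ℝ) ^ 2 * (1 + (c - t) ^ 2)
          + (2 * (c - t) / (1 + (c - t) ^ 2) ^ 2) / (1 / (1 + (c - t) ^ 2))
          = -(κ * (k : ℝ) ^ 2 * (1 + (c - t) ^ 2)) := by
        field_simp
        ring
      rw [key]
      nlinarith
    · -- discontinuity point: contradiction with differentiability
      exfalso
      have hA1 : (1:ℝ) < A := by
        rw [hA, Real.one_lt_rpow_iff_of_pos (by positivity)]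
        left
        exact ⟨by rw [lt_div_iff₀ hκk]; linarith, by norm_num⟩
      have hMt : M t = 1 / (1 + A ^ 2) := by
        simp only [M]
        rw [if_neg (by push_neg; exact ⟨hc1, hc2⟩), if_pos (le_of_eq ht)]
        have hct : (c - t) ^ 2 = A ^ 2 := by
          have : c - t = -A := by linarith
          rw [this]; ring
        rw [hct]
      have hev : M =ᶠ[nhdsWithin t (Set.Ioi t)] fun _ => 1 / (1 + A) := by
        filter_upwards [self_mem_nhdsWithin] with x hx
        simp only [Set.mem_Ioi] at hx
        simp only [M]
        rw [if_neg (by push_neg; exact ⟨by linarith, hc2⟩), if_neg (by push_neg; linarith)]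
      have h1 : Filter.Tendsto M (nhdsWithin t (Set.Ioi t)) (nhds (M t)) :=
        hdiff.continuousAt.continuousWithinAt
      have h2 : Filter.Tendsto M (nhdsWithin t (Set.Ioi t)) (nhds (1 / (1 + A))) :=
        (Filter.tendsto_congr' hev).mpr tendsto_const_nhds
      have heq : M t = 1 / (1 + A) := tendsto_nhds_unique h1 h2
      rw [hMt] at heq
      have hA2 : (0:ℝ) < 1 + A ^ 2 := by positivity
      have hA3 : (0:ℝ) < 1 + A := by positivity
      rw [div_eq_div_iff hA2.ne' hA3.ne'] at heq
      nlinarith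
    · -- constant right region
      have hev : M =ᶠ[nhds t] fun _ => 1 / (1 + A) := by
        have h2 : ∀ᶠ x in nhds t, c + A < x := eventually_gt_nhds (by linarith)
        filter_upwards [h2] with x hx
        simp only [M]
        rw [if_neg (by push_neg; exact ⟨by nlinarith, hc2⟩), if_neg (by push_neg; linarith)]
      have hd : deriv M t = 0 := by rw [hev.deriv_eq]; exact deriv_const t _
      have hMt : M t = 1 / (1 + A) := hev.self_of_nhds
      rw [hd, hMt]
      simp only [b, zero_div, add_zero]
      have hA3 : A ^ 3 = 2 / (κ * (k : ℝ) ^ 2) := by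
        rw [hA, ← Real.rpow_natCast ((2 / (κ * (k : ℝ) ^ 2)) ^ ((1:ℝ) / 3)) 3,
          ← Real.rpow_mul (by positivity)]
        norm_num
      have hA1 : (1:ℝ) < A := by
        rw [hA, Real.one_lt_rpow_iff_of_pos (by positivity)]
        left
        exact ⟨by rw [lt_div_iff₀ hκk]; linarith, by norm_num⟩
      have hD : (0:ℝ) < 1 + (c - t) ^ 2 := by positivity
      have hcube : A ^ 3 < (t - c) ^ 3 := by
        apply pow_lt_pow_left₀ ht (by linarith)
        norm_num
      have hs1 : (1:ℝ) < t - c := by linarith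
      have hkey : 2 < κ * (k : ℝ) ^ 2 * (t - c) ^ 3 := by
        rw [hA3, div_lt_iff₀ hκk] at hcube
        nlinarith
      rw [div_sub' hD.ne', div_nonpos_iff]
      right
      constructor
      · nlinarith [sq_nonneg (c - t), sq_nonneg (t - c - 1)]
      · linarith
end
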